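/- Let p ≥ 5 be prime, r ≥ 1, and suppose nonnegative integers e_i, a_i, f_i for 1 ≤ i ≤ p-1 satisfy: e_i = a_i + f_i, e_i + e_{p-i} is independent of i, f_i + f_{p-i} is independent of i, a_i = a_{p-i}, and e_i - e_{p-1} = r(p-i-1)/p for all i. Then a_i = a_j for all 1 ≤ i, j ≤ p-1, and f_i ≥ r(p-(i+1))/p > 0 for all (p+1)/2 ≤ i < p-1. -/
import Mathlib


/-- Abstract numerical form of the lemma `rank neq0`: for a prime `p ≥ 5`,
`r ≥ 1`, and nonnegative integers `e i, a i, f i` (`1 ≤ i ≤ p-1`) with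
`e i = a i + f i`, `e i + e (p-i)` independent of `i`, `f i + f (p-i)`
independent of `i`, `a i = a (p-i)`, and `e i - e (p-1) = r(p-i-1)/p`, all the
`a i` are equal, and `f i ≥ r(p-(i+1))/p > 0` for `(p+1)/2 ≤ i < p-1`. -/
theorem rank_neq_zero (p r : ℕ) (hp : p.Prime) (hp5 : 5 ≤ p) (hr : 1 ≤ r)
    (e a f : ℕ → ℕ)
    (hsum : ∀ i, 1 ≤ i → i ≤ p - 1 → e i = a i + f i)
    (heconst : ∀ i j, 1 ≤ i → i ≤ p - 1 → 1 ≤ j → j ≤ p - 1 →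
      e i + e (p - i) = e j + e (p - j))
    (hfconst : ∀ i j, 1 ≤ i → i ≤ p - 1 → 1 ≤ j → j ≤ p - 1 →
      f i + f (p - i) = f j + f (p - j))
    (hasym : ∀ i, 1 ≤ i → i ≤ p - 1 → a i = a (p - i))
    (he : ∀ i, 1 ≤ i → i ≤ p - 1 →
      (e i : ℚ) - e (p - 1) = (r : ℚ) * ((p : ℚ) - i - 1) / p) :
    (∀ i j, 1 ≤ i → i ≤ p - 1 → 1 ≤ j → j ≤ p - 1 → a i = a j) ∧
    (∀ i, p + 1 ≤ 2 * i → i < p - 1 →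
      (r : ℚ) * ((p : ℚ) - ((i : ℚ) + 1)) / p ≤ (f i : ℚ) ∧
      0 < (r : ℚ) * ((p : ℚ) - ((i : ℚ) + 1)) / p) := by
  have hp1 : 1 ≤ p - 1 := by omega
  have key : ∀ i j, 1 ≤ i → i ≤ p - 1 → 1 ≤ j → j ≤ p - 1 → a i = a j := by
    intro i j hi1 hi2 hj1 hj2
    have hpi1 : 1 ≤ p - i := by omega
    have hpi2 : p - i ≤ p - 1 := by omega
    have hpj1 : 1 ≤ p - j := by omega
    have hpj2 : p - j ≤ p - 1 := by omega
    have h1 := heconst i j hi1 hi2 hj1 hj2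
    have h2 := hfconst i j hi1 hi2 hj1 hj2
    have e1 := hsum i hi1 hi2
    have e2 := hsum (p - i) hpi1 hpi2
    have e3 := hsum j hj1 hj2
    have e4 := hsum (p - j) hpj1 hpj2
    have s1 := hasym i hi1 hi2
    have s2 := hasym j hj1 hj2
    omega
  refine ⟨key, ?_⟩
  intro i h2i hip
  have hi1 : 1 ≤ i := by omega
  have hi2 : i ≤ p - 1 := by omega
  have hai : a i = a (p - 1) := key i (p - 1) hi1 hi2 hp1 le_rfl
  have hale : a (p - 1) ≤ e (p - 1) := by
    have := hsum (p - 1) hp1 le_rfl; omega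
  have haleQ : (a (p - 1) : ℚ) ≤ (e (p - 1) : ℚ) := by exact_mod_cast hale
  have hfi : (f i : ℚ) = (e i : ℚ) - (a (p - 1) : ℚ) := by
    have h := hsum i hi1 hi2
    rw [hai] at h
    push_cast [h]; ring
  have hei := he i hi1 hi2
  have hpos : 0 < (r : ℚ) * ((p : ℚ) - ((i : ℚ) + 1)) / p := by
    have hip' : (i : ℚ) + 1 < (p : ℚ) := by
      have : i + 1 < p := by omega
      exact_mod_cast this
    have hrq : (0 : ℚ) < r := by exact_mod_cast hr
    have hpq : (0 : ℚ) < p := by positivity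
    apply div_pos (mul_pos hrq (by linarith)) hpq
  refine ⟨?_, hpos⟩
  have : (r : ℚ) * ((p : ℚ) - ((i : ℚ) + 1)) / p = (e i : ℚ) - (e (p - 1) : ℚ) := by
    rw [hei]; ring_nf
  linarith [this, hfi, haleQ]
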